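/- Let n ≥ 2 be a fixed integer and let M > 0 be a constant. For each dimension m, let X_m be a nonnegative random variable with E[X_m] > 0 such that X_m ≤ M · E[X_m] almost surely, and let X_{m,1}, …, X_{m,n} be n independent copies of X_m. Assume the sandwich condition holds almost surely: min_{1≤i≤n} X_{m,i} ≤ E[X_m] ≤ max_{1≤i≤n} X_{m,i}. If for every ε > 0, lim_{m→∞} Pr[ max_{1≤i≤n} X_{m,i} ≤ (1+ε) · min_{1≤i≤n} X_{m,i} ] = 1, then lim_{m→∞} Var[X_m]/(E[X_m])² = 0. -/

import Mathlib

open MeasureTheory ProbabilityTheory Filter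

/-- Durrant–Kabán converse direction, paper Theorem 4.1, "⟸":
Suppose `X_m ≤ M·E[X_m]` almost surely and the sandwich condition
`min_i X_{m,i} ≤ E[X_m] ≤ max_i X_{m,i}` holds almost surely.  If for every `ε > 0`
the probability that the maximum of the `n` independent copies is at most `(1+ε)`
times their minimum tends to `1`, then the relative variance
`Var[X_m]/(E[X_m])²` tends to `0`. -/
theorem stmt_1 {n : ℕ} (hn : 2 ≤ n) {M : ℝ} (hM : 0 < M)
    (Ω : ℕ → Type) [∀ m, MeasureSpace (Ω m)]
    [∀ m, IsProbabilityMeasure (ℙ : Measure (Ω m))]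
    (X : (m : ℕ) → Fin n → Ω m → ℝ)
    (hmeas : ∀ m i, Measurable (X m i))
    (hnonneg : ∀ m i ω, 0 ≤ X m i ω)
    (hindep : ∀ m, iIndepFun (X m) ℙ)
    (hident : ∀ m i, Measure.map (X m i) ℙ = Measure.map (X m ⟨0, by omega⟩) ℙ)
    (hEpos : ∀ m, 0 < ∫ ω, X m ⟨0, by omega⟩ ω)
    (hbdd : ∀ m i, ∀ᵐ ω, X m i ω ≤ M * ∫ ω', X m ⟨0, by omega⟩ ω')
    (hsandwich : ∀ m, ∀ᵐ ω,
      (⨅ i, X m i ω) ≤ (∫ ω', X m ⟨0, by omega⟩ ω') ∧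
      (∫ ω', X m ⟨0, by omega⟩ ω') ≤ ⨆ i, X m i ω)
    (hunstable : ∀ ε > (0 : ℝ), Tendsto
      (fun m => (ℙ : Measure (Ω m))
        {ω | (⨆ i, X m i ω) ≤ (1 + ε) * ⨅ i, X m i ω})
      atTop (nhds 1)) :
    Tendsto
      (fun m => variance (X m ⟨0, by omega⟩) ℙ / (∫ ω, X m ⟨0, by omega⟩ ω) ^ 2)
      atTop (nhds 0) := by
  have hn0 : (0 : ℕ) < n := by omega
  set i0 : Fin n := ⟨0, hn0⟩ with hi0
  have hne : Nonempty (Fin n) := ⟨i0⟩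
  set M' : ℝ := max M 1 with hM'def
  have hM'1 : (1 : ℝ) ≤ M' := le_max_right _ _
  have hM'M : M ≤ M' := le_max_left _ _
  -- the key quantitative bound
  have key : ∀ m : ℕ, ∀ ε : ℝ, 0 < ε →
      variance (X m i0) ℙ / (∫ ω, X m i0 ω) ^ 2
        ≤ ε ^ 2 + M' ^ 2 *
          ((ℙ : Measure (Ω m))
            {ω | (⨆ i, X m i ω) ≤ (1 + ε) * ⨅ i, X m i ω}ᶜ).toReal := by
    intro m ε hε
    set μ : ℝ := ∫ ω, X m i0 ω with hμdef
    have hμpos : 0 < μ := hEpos m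
    set A : Set (Ω m) := {ω | (⨆ i, X m i ω) ≤ (1 + ε) * ⨅ i, X m i ω} with hAdef
    have hA : MeasurableSet A :=
      measurableSet_le (Measurable.iSup (hmeas m))
        (measurable_const.mul (Measurable.iInf (hmeas m)))
    -- X m i0 is in L²
    have hmem : MemLp (X m i0) 2 ℙ := by
      refine MemLp.of_bound (hmeas m i0).aestronglyMeasurable (M * μ) ?_
      filter_upwards [hbdd m i0] with ω hω
      rw [Real.norm_eq_abs, abs_of_nonneg (hnonneg m i0 ω)]
      exact hω
    have hvar : variance (X m i0) ℙ = ∫ ω, (X m i0 ω - μ) ^ 2 := by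
      rw [variance_eq_integral hmem.aemeasurable]
    -- integrands
    set f : Ω m → ℝ := fun ω => (X m i0 ω - μ) ^ 2 with hfdef
    set g : Ω m → ℝ := fun ω =>
      ε ^ 2 * μ ^ 2 + Aᶜ.indicator (fun _ => (M' * μ) ^ 2) ω with hgdef
    have hfint : Integrable f := by
      have := (hmem.sub (memLp_const μ)).integrable_sq
      simpa [hfdef, sq] using this
    have hgint : Integrable g := by
      refine (integrable_const _).add ?_
      exact (integrable_const _).indicator hA.compl
    -- a.e. pointwise bound
    have hae : ∀ᵐ ω, f ω ≤ g ω := by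
      filter_upwards [hbdd m i0, hsandwich m] with ω hb hs
      have hXS : X m i0 ω ≤ ⨆ i, X m i ω :=
        le_ciSup (f := fun i => X m i ω)
          (Set.Finite.bddAbove (Set.finite_range _)) i0
      have hIX : (⨅ i, X m i ω) ≤ X m i0 ω :=
        ciInf_le (f := fun i => X m i ω)
          (Set.Finite.bddBelow (Set.finite_range _)) i0
      have hInn : 0 ≤ ⨅ i, X m i ω :=
        le_ciInf fun i => hnonneg m i ω
      by_cases hωA : ω ∈ A
      · have hind : Aᶜ.indicator (fun _ => (M' * μ) ^ 2) ω = 0 := by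
          simp [Set.indicator_of_notMem, hωA]
        have hSI : (⨆ i, X m i ω) ≤ (1 + ε) * ⨅ i, X m i ω := hωA
        have h1 : X m i0 ω - μ ≤ ε * μ := by nlinarith [hs.1, hs.2]
        have h2 : -(ε * μ) ≤ X m i0 ω - μ := by nlinarith [hs.1, hs.2]
        have := sq_le_sq' h2 h1
        simp only [hgdef, hfdef, hind, add_zero]
        nlinarith [this]
      · have hind : Aᶜ.indicator (fun _ => (M' * μ) ^ 2) ω = (M' * μ) ^ 2 := by
          simp [Set.indicator_of_mem, hωA]
        have h1 : X m i0 ω - μ ≤ M' * μ := by nlinarith [hnonneg m i0 ω]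
        have h2 : -(M' * μ) ≤ X m i0 ω - μ := by nlinarith [hnonneg m i0 ω]
        have := sq_le_sq' h2 h1
        simp only [hgdef, hfdef, hind]
        nlinarith [this, sq_nonneg ε, sq_nonneg μ]
    have hintg : ∫ ω, g ω = ε ^ 2 * μ ^ 2 + (M' * μ) ^ 2 * (ℙ Aᶜ).toReal := by
      rw [hgdef]
      rw [integral_add (integrable_const _) ((integrable_const _).indicator hA.compl)]
      rw [integral_const, integral_indicator_const _ hA.compl]
      simp [mul_comm, Measure.real]
    have hVar : variance (X m i0) ℙ ≤ ε ^ 2 * μ ^ 2 + (M' * μ) ^ 2 * (ℙ Aᶜ).toReal := by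
      rw [hvar, ← hintg]
      exact integral_mono_ae hfint hgint hae
    rw [div_le_iff₀ (by positivity)]
    have hPnn : (0 : ℝ) ≤ (ℙ Aᶜ).toReal := ENNReal.toReal_nonneg
    nlinarith [hVar, sq_nonneg μ]
  -- now the limit argument
  rw [tendsto_order]
  constructor
  · intro a ha
    filter_upwards with m
    exact lt_of_lt_of_le ha (div_nonneg (variance_nonneg _ _) (sq_nonneg _))
  · intro a ha
    set ε : ℝ := min 1 (a / 4) with hεdef
    have hεpos : 0 < ε := lt_min one_pos (by linarith)
    have hεsq : ε ^ 2 ≤ a / 4 := by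
      have h1 : ε ≤ 1 := min_le_left _ _
      have h2 : ε ≤ a / 4 := min_le_right _ _
      nlinarith
    have htend := hunstable ε hεpos
    have htoReal : Tendsto
        (fun m => ((ℙ : Measure (Ω m))
          {ω | (⨆ i, X m i ω) ≤ (1 + ε) * ⨅ i, X m i ω}).toReal)
        atTop (nhds 1) := by
      have := (ENNReal.tendsto_toReal (a := (1 : ENNReal)) (by simp)).comp htend
      exact this
    have hcompl : Tendsto
        (fun m => ε ^ 2 + M' ^ 2 * ((ℙ : Measure (Ω m))
          {ω | (⨆ i, X m i ω) ≤ (1 + ε) * ⨅ i, X m i ω}ᶜ).toReal)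
        atTop (nhds (ε ^ 2)) := by
      have hrw : ∀ m, ((ℙ : Measure (Ω m))
          {ω | (⨆ i, X m i ω) ≤ (1 + ε) * ⨅ i, X m i ω}ᶜ).toReal
          = 1 - ((ℙ : Measure (Ω m))
            {ω | (⨆ i, X m i ω) ≤ (1 + ε) * ⨅ i, X m i ω}).toReal := by
        intro m
        have hA : MeasurableSet
            {ω | (⨆ i, X m i ω) ≤ (1 + ε) * ⨅ i, X m i ω} :=
          measurableSet_le (Measurable.iSup (hmeas m))
            (measurable_const.mul (Measurable.iInf (hmeas m)))
        rw [prob_compl_eq_one_sub hA,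
          ENNReal.toReal_sub_of_le prob_le_one ENNReal.one_ne_top]
        simp
      simp_rw [hrw]
      have : Tendsto (fun m => ε ^ 2 + M' ^ 2 * (1 - ((ℙ : Measure (Ω m))
          {ω | (⨆ i, X m i ω) ≤ (1 + ε) * ⨅ i, X m i ω}).toReal))
          atTop (nhds (ε ^ 2 + M' ^ 2 * (1 - 1))) :=
        tendsto_const_nhds.add
          (tendsto_const_nhds.mul (tendsto_const_nhds.sub htoReal))
      simpa using this
    have hlt : ε ^ 2 < a := by linarith
    filter_upwards [hcompl.eventually_lt_const hlt] with m hm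
    exact lt_of_le_of_lt (key m ε hεpos) hm
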